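/- Let x, y : ℤ → ℝ be finitely supported signals, and suppose there exist ν ∈ ℤ and a real number a > 0 such that x[n] = a · y[n + ν] for all n ∈ ℤ. Then for every pair of monotonically non-decreasing functions φ, ψ : ℝ → ℝ with φ(0) = ψ(0) = 0, the cross-correlation function of φ ∘ x and ψ ∘ y is maximized at ν; that is, ((φ ∘ x) ⋆ (ψ ∘ y))[n] ≤ ((φ ∘ x) ⋆ (ψ ∘ y))[ν] for all n ∈ ℤ. -/
import Mathlib

/-- Cyclic rotation by `-d` on the interval `[L, L+n)`, identity elsewhere. -/
def rotPerm (L n d : ℤ) : Equiv.Perm ℤ where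
  toFun j := if 0 < n ∧ L ≤ j ∧ j < L + n then L + (j - d - L) % n else j
  invFun j := if 0 < n ∧ L ≤ j ∧ j < L + n then L + (j + d - L) % n else j
  left_inv j := by
    dsimp only
    by_cases h : 0 < n ∧ L ≤ j ∧ j < L + n
    · obtain ⟨hn, h1, h2⟩ := h
      have hmem : 0 < n ∧ L ≤ L + (j - d - L) % n ∧ L + (j - d - L) % n < L + n := by
        refine ⟨hn, ?_, ?_⟩
        · have := Int.emod_nonneg (j - d - L) hn.ne'
          linarith
        · have := Int.emod_lt_of_pos (j - d - L) hn
          linarith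
      have htj : (if 0 < n ∧ L ≤ j ∧ j < L + n then L + (j - d - L) % n else j)
          = L + (j - d - L) % n := if_pos ⟨hn, h1, h2⟩
      rw [htj, if_pos hmem]
      have : (L + (j - d - L) % n + d - L) % n = (j - d - L + d) % n := by
        rw [show L + (j - d - L) % n + d - L = (j - d - L) % n + d by ring,
          Int.emod_add_emod]
      rw [this, show j - d - L + d = j - L by ring,
        Int.emod_eq_of_lt (by linarith) (by linarith)]
      ring
    · rw [if_neg h, if_neg h]
  right_inv j := by
    dsimp only
    by_cases h : 0 < n ∧ L ≤ j ∧ j < L + n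
    · obtain ⟨hn, h1, h2⟩ := h
      have hmem : 0 < n ∧ L ≤ L + (j + d - L) % n ∧ L + (j + d - L) % n < L + n := by
        refine ⟨hn, ?_, ?_⟩
        · have := Int.emod_nonneg (j + d - L) hn.ne'
          linarith
        · have := Int.emod_lt_of_pos (j + d - L) hn
          linarith
      have htj : (if 0 < n ∧ L ≤ j ∧ j < L + n then L + (j + d - L) % n else j)
          = L + (j + d - L) % n := if_pos ⟨hn, h1, h2⟩
      rw [htj, if_pos hmem]
      have : (L + (j + d - L) % n - d - L) % n = (j + d - L - d) % n := by
        rw [show L + (j + d - L) % n - d - L = (j + d - L) % n + -d by ring,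
          Int.emod_add_emod, show j + d - L + -d = j + d - L - d by ring]
      rw [this, show j + d - L - d = j - L by ring,
        Int.emod_eq_of_lt (by linarith) (by linarith)]
      ring
    · rw [if_neg h, if_neg h]

/-- Core shift lemma: if `f = F ∘ y` and `g = G ∘ y` for monotone `F, G` vanishing at `0`
and `y` finitely supported, then the correlation of `f` and `g` is maximized at lag `0`. -/
theorem core_shift (y : ℤ → ℝ) (hy : (Function.support y).Finite)
    (F G : ℝ → ℝ) (hF : Monotone F) (hG : Monotone G)
    (hF0 : F 0 = 0) (hG0 : G 0 = 0) (d : ℤ) :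
    (∑ᶠ k : ℤ, F (y k) * G (y (k + d))) ≤ ∑ᶠ k : ℤ, F (y k) * G (y k) := by
  set f : ℤ → ℝ := fun k => F (y k) with hf
  set g : ℤ → ℝ := fun k => G (y k) with hg
  have hfy : ∀ k, y k = 0 → f k = 0 := fun k h => by simp [hf, h, hF0]
  have hgy : ∀ k, y k = 0 → g k = 0 := fun k h => by simp [hg, h, hG0]
  have hmono : Monovary f g := by
    intro i j hij
    have hyij : y i ≤ y j := by
      by_contra hc
      exact absurd (hG (le_of_not_ge hc)) (not_le.2 hij)
    exact hF hyij
  -- bound the support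
  set M : ℕ := hy.toFinset.sup (fun k => k.natAbs) with hM
  have hbound : ∀ k : ℤ, y k ≠ 0 → -(M : ℤ) ≤ k ∧ k ≤ (M : ℤ) := by
    intro k hk
    have : k.natAbs ≤ M := Finset.le_sup (f := fun k : ℤ => k.natAbs)
      (hy.mem_toFinset.2 hk)
    have h2 : |k| ≤ (M : ℤ) := by
      rw [Int.abs_eq_natAbs]
      exact_mod_cast this
    exact abs_le.1 h2
  set K : ℤ := (M : ℤ) + |d| with hK
  have hK0 : 0 ≤ K := by positivity
  set L : ℤ := -K with hL
  set nn : ℤ := 2 * K + 1 with hnn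
  have hn : 0 < nn := by linarith
  set s : Finset ℤ := Finset.Icc (-K) K with hs
  set σ : Equiv.Perm ℤ := rotPerm L nn d with hσ
  -- σ fixes outside s
  have hfix : {x : ℤ | σ x ≠ x} ⊆ (s : Set ℤ) := by
    intro j hj
    simp only [Set.mem_setOf_eq] at hj
    by_contra hjs
    apply hj
    have : ¬(0 < nn ∧ L ≤ j ∧ j < L + nn) := by
      intro ⟨_, h1, h2⟩
      exact hjs (by simp [hs, Finset.mem_Icc]; constructor <;> [linarith [hL ▸ h1]; linarith])
    simp only [hσ, rotPerm, Equiv.coe_fn_mk, if_neg this]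
  -- σ acts as shift by -d on the support of y
  have hshift : ∀ j : ℤ, y j ≠ 0 → σ j = j - d := by
    intro j hj
    obtain ⟨hj1, hj2⟩ := hbound j hj
    have habs1 : -|d| ≤ d := neg_abs_le d
    have habs2 : d ≤ |d| := le_abs_self d
    have hcond : 0 < nn ∧ L ≤ j ∧ j < L + nn := ⟨hn, by omega, by omega⟩
    have hrange : (j - d - L) % nn = j - d - L :=
      Int.emod_eq_of_lt (by omega) (by omega)
    simp only [hσ, rotPerm, Equiv.coe_fn_mk, if_pos hcond, hrange]
    omega
  -- support inclusions
  have hTs : ∀ k : ℤ, y k ≠ 0 → k ∈ s := by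
    intro k hk
    obtain ⟨h1, h2⟩ := hbound k hk
    have : 0 ≤ |d| := abs_nonneg d
    simp only [hs, Finset.mem_Icc]
    omega
  -- rewrite LHS
  have e1 : (∑ᶠ k : ℤ, f k * g (k + d)) = ∑ᶠ j : ℤ, f (j - d) * g j := by
    rw [← finsum_comp_equiv (Equiv.addRight d) (f := fun j => f (j - d) * g j)]
    refine finsum_congr fun k => ?_
    simp
  have e2 : (∑ᶠ j : ℤ, f (j - d) * g j) = ∑ j ∈ s, f (j - d) * g j := by
    refine finsum_eq_finset_sum_of_support_subset _ fun j hj => ?_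
    simp only [Function.mem_support] at hj
    have : g j ≠ 0 := fun h => hj (by rw [h, mul_zero])
    have : y j ≠ 0 := fun h => this (hgy j h)
    exact hTs j this
  have e3 : (∑ j ∈ s, f (j - d) * g j) = ∑ j ∈ s, f (σ j) * g j := by
    refine Finset.sum_congr rfl fun j _ => ?_
    by_cases hgj : g j = 0
    · rw [hgj, mul_zero, mul_zero]
    · have hyj : y j ≠ 0 := fun h => hgj (hgy j h)
      rw [hshift j hyj]
  have e4 : (∑ j ∈ s, f (σ j) * g j) ≤ ∑ j ∈ s, f j * g j :=
    (hmono.monovaryOn _).sum_comp_perm_mul_le_sum_mul hfix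
  have e5 : (∑ j ∈ s, f j * g j) = ∑ᶠ k : ℤ, f k * g k := by
    refine (finsum_eq_finset_sum_of_support_subset _ fun j hj => ?_).symm
    simp only [Function.mem_support] at hj
    have : f j ≠ 0 := fun h => hj (by rw [h, zero_mul])
    have : y j ≠ 0 := fun h => this (hfy j h)
    exact hTs j this
  calc (∑ᶠ k : ℤ, f k * g (k + d)) = ∑ j ∈ s, f (σ j) * g j := by rw [e1, e2, e3]
    _ ≤ ∑ j ∈ s, f j * g j := e4
    _ = ∑ᶠ k : ℤ, f k * g k := e5

/-- Cross-correlation peak invariance under monotone transformations: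
if `x[n] = a * y[n + ν]` for all `n` with `a > 0`, then for any monotone
non-decreasing `φ, ψ` vanishing at `0`, the cross-correlation of `φ ∘ x`
and `ψ ∘ y` is maximized at `ν`. -/
theorem crosscorr_comp_monotone_max_at_shift
    (x y : ℤ → ℝ)
    (hx : (Function.support x).Finite)
    (hy : (Function.support y).Finite)
    (ν : ℤ) (a : ℝ) (ha : 0 < a)
    (hxy : ∀ n : ℤ, x n = a * y (n + ν))
    (φ ψ : ℝ → ℝ) (hφ : Monotone φ) (hψ : Monotone ψ)
    (hφ0 : φ 0 = 0) (hψ0 : ψ 0 = 0) :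
    ∀ n : ℤ,
      (∑ᶠ m : ℤ, φ (x m) * ψ (y (m + n))) ≤
        ∑ᶠ m : ℤ, φ (x m) * ψ (y (m + ν)) := by
  intro n
  set F : ℝ → ℝ := fun t => φ (a * t) with hF
  have hFmono : Monotone F := fun s t h => hφ (mul_le_mul_of_nonneg_left h ha.le)
  have hF0 : F 0 = 0 := by simp [hF, hφ0]
  -- reindex both sides via m ↦ m + ν
  have key : ∀ c : ℤ,
      (∑ᶠ m : ℤ, φ (x m) * ψ (y (m + c))) = ∑ᶠ k : ℤ, F (y k) * ψ (y (k + (c - ν))) := by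
    intro c
    rw [← finsum_comp_equiv (Equiv.addRight ν)
      (f := fun k => F (y k) * ψ (y (k + (c - ν))))]
    refine finsum_congr fun m => ?_
    simp only [Equiv.coe_addRight]
    rw [hxy m, show m + ν + (c - ν) = m + c by ring]
  rw [key n, key ν]
  simp only [sub_self, add_zero]
  exact core_shift y hy F ψ hFmono hψ hF0 hψ0 (n - ν)
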